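/- (Proposition 2, enhanced upper bound.) Let u₁, u₂ be real numbers with u₁ ≥ u₂ and set δ = u₁ − u₂. Let l_δ, u_δ, l_θ, u_θ, θ be real numbers with 0 ≤ l_δ ≤ δ ≤ u_δ and 0 < l_θ ≤ θ ≤ u_θ. Then u₁·Φ(δ/θ) + u₂·Φ(−δ/θ) + θ·φ(δ/θ) ≤ u₁·Φ(u_δ/l_θ) + u₂·(1 − Φ(u_δ/l_θ)) + u_θ·φ(l_δ/u_θ). -/
import Mathlib


open MeasureTheory ProbabilityTheory Real

/-- Standard normal p.d.f. -/
noncomputable def phi (w : ℝ) : ℝ := (1 / Real.sqrt (2 * Real.pi)) * Real.exp (-w ^ 2 / 2)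

/-- Standard normal c.d.f. -/
noncomputable def Phi (w : ℝ) : ℝ := ∫ u in Set.Iic w, phi u

lemma phi_nonneg (w : ℝ) : 0 ≤ phi w := by
  unfold phi
  positivity

lemma integrable_phi : Integrable phi := by
  have h : Integrable (fun x : ℝ => Real.exp (-(1/2 : ℝ) * x ^ 2)) :=
    integrable_exp_neg_mul_sq (by norm_num)
  have := h.const_mul (1 / Real.sqrt (2 * Real.pi))
  refine this.congr (Filter.Eventually.of_forall fun x => ?_)
  unfold phi
  ring_nf

lemma integral_phi : ∫ x, phi x = 1 := by
  have h : ∫ x : ℝ, Real.exp (-(1/2 : ℝ) * x ^ 2) = Real.sqrt (Real.pi / (1/2)) :=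
    integral_gaussian (1/2)
  have heq : ∀ x : ℝ, phi x = (1 / Real.sqrt (2 * Real.pi)) * Real.exp (-(1/2 : ℝ) * x ^ 2) := by
    intro x; unfold phi; ring_nf
  calc ∫ x, phi x = ∫ x, (1 / Real.sqrt (2 * Real.pi)) * Real.exp (-(1/2 : ℝ) * x ^ 2) := by
        simp_rw [heq]
    _ = (1 / Real.sqrt (2 * Real.pi)) * ∫ x, Real.exp (-(1/2 : ℝ) * x ^ 2) :=
        integral_const_mul _ _
    _ = 1 := by
        rw [h]
        have : Real.pi / (1/2) = 2 * Real.pi := by ring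
        rw [this]
        have hpos : (0:ℝ) < Real.sqrt (2 * Real.pi) := by
          apply Real.sqrt_pos.mpr; positivity
        field_simp

lemma phi_even (x : ℝ) : phi (-x) = phi x := by
  unfold phi; ring_nf

lemma Phi_neg (x : ℝ) : Phi (-x) = 1 - Phi x := by
  unfold Phi
  have h1 : ∫ u in Set.Iic (-x), phi u = ∫ u in Set.Iic (-x), phi (-u) := by
    simp_rw [phi_even]
  have h2 : ∫ u in Set.Iic (-x), phi (-u) = ∫ u in Set.Ioi x, phi u := by
    rw [integral_comp_neg_Iic]
    norm_num
  have h3 : (∫ u in Set.Iic x, phi u) + ∫ u in Set.Ioi x, phi u = ∫ u, phi u :=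
    intervalIntegral.integral_Iic_add_Ioi integrable_phi.integrableOn integrable_phi.integrableOn
  rw [h1, h2]
  rw [integral_phi] at h3
  linarith

lemma Phi_mono : Monotone Phi := by
  intro a b hab
  unfold Phi
  apply setIntegral_mono_set integrable_phi.integrableOn
    (Filter.Eventually.of_forall phi_nonneg)
  exact Filter.Eventually.of_forall fun x hx => le_trans hx hab

lemma phi_anti {a b : ℝ} (h0 : 0 ≤ a) (hab : a ≤ b) : phi b ≤ phi a := by
  unfold phi
  have : Real.exp (-b ^ 2 / 2) ≤ Real.exp (-a ^ 2 / 2) := by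
    apply Real.exp_le_exp.mpr
    nlinarith
  have hc : 0 < 1 / Real.sqrt (2 * Real.pi) := by
    have : (0:ℝ) < Real.sqrt (2 * Real.pi) := Real.sqrt_pos.mpr (by positivity)
    positivity
  nlinarith

theorem enhanced_upper_bound
    (u₁ u₂ lδ uδ lθ uθ θ : ℝ) (h12 : u₂ ≤ u₁)
    (hlδ : 0 ≤ lδ) (hδl : lδ ≤ u₁ - u₂) (hδu : u₁ - u₂ ≤ uδ)
    (hlθ : 0 < lθ) (hθl : lθ ≤ θ) (hθu : θ ≤ uθ) :
    u₁ * Phi ((u₁ - u₂) / θ) + u₂ * Phi (-(u₁ - u₂) / θ) + θ * phi ((u₁ - u₂) / θ)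
      ≤ u₁ * Phi (uδ / lθ) + u₂ * (1 - Phi (uδ / lθ)) + uθ * phi (lδ / uθ) := by
  have hθ : 0 < θ := lt_of_lt_of_le hlθ hθl
  have huθ : 0 < uθ := lt_of_lt_of_le hθ hθu
  set a := (u₁ - u₂) / θ with ha
  have ha0 : 0 ≤ a := div_nonneg (by linarith) hθ.le
  have hab : a ≤ uδ / lθ := by
    apply div_le_div₀ (by linarith) hδu hlθ hθl
  have hca : lδ / uθ ≤ a := by
    apply div_le_div₀ (by linarith) hδl hθ hθu
  have hc0 : 0 ≤ lδ / uθ := div_nonneg hlδ huθ.le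
  have hneg : -(u₁ - u₂) / θ = -a := by rw [ha, neg_div]
  rw [hneg, Phi_neg]
  have h1 : Phi a ≤ Phi (uδ / lθ) := Phi_mono hab
  have h2 : phi a ≤ phi (lδ / uθ) := phi_anti hc0 hca
  have h3 : θ * phi a ≤ uθ * phi (lδ / uθ) := by
    calc θ * phi a ≤ uθ * phi a := by
          apply mul_le_mul_of_nonneg_right hθu (phi_nonneg a)
      _ ≤ uθ * phi (lδ / uθ) := by
          apply mul_le_mul_of_nonneg_left h2 huθ.le
  nlinarith [h1, h3, sub_nonneg.mpr h12]
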